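/- For prefix-closed languages L₁,...,Lₙ over Σ, the map h sending σ ∈ ⋃ᵢαLᵢ to σ̲ = (σ/αL₁,...,σ/αLₙ), extended to a monoid homomorphism on strings, maps L₁ ‖ ⋯ ‖ Lₙ surjectively onto VFS(L₁,...,Lₙ); moreover s ∈ L₁ ‖ ⋯ ‖ Lₙ if and only if h(s) ∈ VFS(L₁,...,Lₙ). -/
import Mathlib


open scoped Classical

/-- Projection of a string onto a subalphabet `A`: delete all symbols not in `A`. -/
noncomputable def proj {α : Type*} (A : Set α) : List α → List α
  | [] => []
  | a :: s => if a ∈ A then a :: proj A s else proj A s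

/-- The vector operation `σ̲ = (σ/A₁, …, σ/Aₙ)` associated to a symbol `σ`. -/
noncomputable def vop {α : Type*} {n : ℕ} (A : Fin n → Set α) (σ : α) :
    Fin n → List α :=
  fun i => if σ ∈ A i then [σ] else []

/-- The product `σ̲₁ ⋯ σ̲ₘ` (elementwise concatenation in `(Σ*)ⁿ`) of the vector
operations of the symbols in a list. -/
noncomputable def vprod {α : Type*} {n : ℕ} (A : Fin n → Set α) :
    List α → (Fin n → List α)
  | [] => fun _ => []
  | σ :: l => fun i => vop A σ i ++ vprod A l i

/-- Membership in the submonoid `Vops(A₁,…,Aₙ)*` of `(Σ*)ⁿ` generated by the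
vector operations. -/
noncomputable def InVops {α : Type*} {n : ℕ} (A : Fin n → Set α)
    (v : Fin n → List α) : Prop :=
  ∃ l : List α, (∀ σ ∈ l, σ ∈ ⋃ i, A i) ∧ vprod A l = v

/-- `VFS(L₁,…,Lₙ) = Vops(A₁,…,Aₙ)* ∩ (L₁ × ⋯ × Lₙ)`. -/
noncomputable def VFS {α : Type*} {n : ℕ} (A : Fin n → Set α)
    (L : Fin n → Set (List α)) : Set (Fin n → List α) :=
  {v | InVops A v ∧ ∀ i, v i ∈ L i}

/-- `L₁ ‖ ⋯ ‖ Lₙ = {s ∈ (⋃ᵢAᵢ)* : s/Aᵢ ∈ Lᵢ for all i}`. -/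
noncomputable def Par {α : Type*} {n : ℕ} (A : Fin n → Set α)
    (L : Fin n → Set (List α)) : Set (List α) :=
  {s | (∀ a ∈ s, a ∈ ⋃ i, A i) ∧ ∀ i, proj (A i) s ∈ L i}

/-- The hypotheses that each `(Lᵢ, Aᵢ)` is a nonempty prefix-closed language
over the subalphabet `Aᵢ`. -/
def IsPCL {α : Type*} {n : ℕ} (A : Fin n → Set α)
    (L : Fin n → Set (List α)) : Prop :=
  ∀ i, (L i).Nonempty ∧ (∀ s ∈ L i, ∀ a ∈ s, a ∈ A i) ∧
    (∀ s ∈ L i, ∀ t, t <+: s → t ∈ L i)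


lemma vprod_eq_proj {α : Type*} {n : ℕ} (A : Fin n → Set α) (s : List α) (i : Fin n) :
    vprod A s i = proj (A i) s := by
  induction s with
  | nil => rfl
  | cons a t ih =>
    simp only [vprod, vop, proj, ih]
    split <;> simp

/-- The homomorphism `h : σ ↦ σ̲` maps `L₁ ‖ ⋯ ‖ Lₙ` surjectively onto
`VFS(L₁,…,Lₙ)`; moreover `s ∈ L₁ ‖ ⋯ ‖ Lₙ` iff `h(s) ∈ VFS(L₁,…,Lₙ)`. -/
theorem par_to_vfs {α : Type*} {n : ℕ} (A : Fin n → Set α)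
    (L : Fin n → Set (List α)) (hL : IsPCL A L) :
    (∀ s ∈ Par A L, vprod A s ∈ VFS A L) ∧
    (∀ v ∈ VFS A L, ∃ s ∈ Par A L, vprod A s = v) ∧
    (∀ s : List α, (∀ a ∈ s, a ∈ ⋃ i, A i) →
      (s ∈ Par A L ↔ vprod A s ∈ VFS A L)) := by
  have key : ∀ s : List α, (∀ a ∈ s, a ∈ ⋃ i, A i) →
      (s ∈ Par A L ↔ vprod A s ∈ VFS A L) := by
    intro s hs
    constructor
    · rintro ⟨h1, h2⟩
      exact ⟨⟨s, h1, rfl⟩, fun i => by rw [vprod_eq_proj]; exact h2 i⟩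
    · rintro ⟨_, h2⟩
      exact ⟨hs, fun i => by rw [← vprod_eq_proj A s i]; exact h2 i⟩
  refine ⟨fun s hs => (key s hs.1).mp hs, ?_, key⟩
  rintro v ⟨⟨l, hl, rfl⟩, h2⟩
  exact ⟨l, (key l hl).mpr ⟨⟨l, hl, rfl⟩, h2⟩, rfl⟩
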